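/- Let r ≥ 2 and m ≥ 0 be integers. There exists a Laurent polynomial P(t) = Σ_{j ∈ ℤ} a_j t^j with complex coefficients (only finitely many a_j nonzero) such that for every β ∈ ℂ with ⦃β+k⦄ ≠ 0 for all k ∈ H_r, one has Σ_{k ∈ H_r} (⦃rβ⦄/⦃β+k⦄)^m = Σ_j a_j (q^{β})^j. (This is the paper's remark that the Verlinde formula, though not apparently so, yields a Laurent polynomial in q^{β}.) -/

import Mathlib

/-- `q^x = exp(π i x / r)`. -/
noncomputable def qc (r : ℕ) (x : ℂ) : ℂ := Complex.exp (Real.pi * Complex.I * x / r)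

/-- `⦃x⦄ = q^x - q^{-x}`. -/
noncomputable def br (r : ℕ) (x : ℂ) : ℂ := qc r x - qc r (-x)

/-- `H_r = {1-r, 3-r, …, r-1}`, the `r` integers `2j - (r-1)` for `j = 0, …, r-1`. -/
def Hr (r : ℕ) : Finset ℤ := (Finset.range r).image (fun j : ℕ => 2 * (j : ℤ) - ((r : ℤ) - 1))

lemma qc_ne (r : ℕ) (x : ℂ) : qc r x ≠ 0 := Complex.exp_ne_zero _

lemma qc_mul (r : ℕ) (x y : ℂ) : qc r x * qc r y = qc r (x + y) := by
  unfold qc; rw [← Complex.exp_add]; congr 1; ring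

lemma qc_neg (r : ℕ) (x : ℂ) : qc r (-x) = (qc r x)⁻¹ := by
  refine eq_inv_of_mul_eq_one_left ?_
  rw [qc_mul]
  simp [qc]

lemma qc_pow (r : ℕ) (x : ℂ) (n : ℕ) : qc r ((n : ℂ) * x) = (qc r x) ^ n := by
  unfold qc
  rw [← Complex.exp_nat_mul]; congr 1; ring

lemma u_pow (r : ℕ) (hr : 1 ≤ r) (k : ℤ) : (qc r (-(2 * (k:ℂ)))) ^ r = 1 := by
  rw [← qc_pow]
  unfold qc
  have hrne : (r : ℂ) ≠ 0 := Nat.cast_ne_zero.mpr (by omega)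
  rw [show (Real.pi : ℂ) * Complex.I * ((r:ℂ) * -(2 * (k:ℂ))) / r
      = (-k : ℤ) * (2 * Real.pi * Complex.I) by push_cast; field_simp]
  exact Complex.exp_int_mul_two_pi_mul_I _

/-- The key pointwise identity: `⦃rβ⦄/⦃β+k⦄` is a Laurent polynomial in `q^β`. -/
lemma key (r : ℕ) (hr : 2 ≤ r) (k : ℤ) (β : ℂ) (h : br r (β + (k:ℂ)) ≠ 0) :
    br r ((r:ℂ) * β) / br r (β + (k:ℂ)) =
      qc r (-(k:ℂ)) * (qc r β) ^ ((1:ℤ) - r) *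
        ∑ j ∈ Finset.range r, (qc r (-(2 * (k:ℂ)))) ^ (r - 1 - j) * (qc r β) ^ (2 * j) := by
  set z := qc r β with hz
  set w := qc r (k:ℂ) with hw
  set u := qc r (-(2 * (k:ℂ))) with hu'
  have zne : z ≠ 0 := qc_ne r β
  have wne : w ≠ 0 := qc_ne r _
  have hu : u = (w * w)⁻¹ := by
    rw [hu', hw, qc_mul, show -(2*(k:ℂ)) = -((k:ℂ)+(k:ℂ)) by ring, qc_neg]
  have hur : u ^ r = 1 := u_pow r (by omega) k
  have hG : (∑ j ∈ Finset.range r, u ^ (r - 1 - j) * z ^ (2 * j)) * (z ^ 2 - u)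
      = z ^ r * z ^ r - 1 := by
    have h' := geom_sum₂_mul (z ^ 2) u r
    rw [hur] at h'
    rw [show z ^ r * z ^ r = (z^2) ^ r by rw [← pow_mul, two_mul, pow_add], ← h']
    congr 1
    refine Finset.sum_congr rfl fun j _ => ?_
    rw [pow_mul]; ring
  have hbrk : br r (β + (k:ℂ)) = z⁻¹ * w * (z ^ 2 - u) := by
    rw [br, neg_add, ← qc_mul, ← qc_mul, qc_neg, qc_neg, ← hz, ← hw, hu]
    field_simp
  have hbr : br r ((r:ℂ) * β) = z ^ r - (z ^ r)⁻¹ := by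
    rw [br, show -((r:ℂ) * β) = (r:ℂ) * (-β) by ring, qc_pow, qc_pow, qc_neg,
      inv_pow, ← hz]
  rw [div_eq_iff h, hbr, hbrk, qc_neg, ← hw,
    show ((1:ℤ) - r) = -(((r:ℕ):ℤ) - 1) by ring, zpow_neg,
    show (((r:ℕ):ℤ) - 1) = ((r - 1 : ℕ) : ℤ) by omega, zpow_natCast]
  have h2 : z ^ 2 - u ≠ 0 := by
    intro hc
    apply h
    rw [hbrk, hc, mul_zero]
  have hzr : z ^ (r - 1) * z = z ^ r := by
    rw [← pow_succ]; congr 1; omega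
  field_simp
  rw [mul_assoc _ (z ^ (r - 1)), hzr]
  linear_combination (-(z ^ r)) * hG

/-- there is a Laurent polynomial `P(t) = Σ_{j} a_j t^j` such that
whenever `⦃β+k⦄ ≠ 0` for all `k ∈ H_r`,
`Σ_{k ∈ H_r} (⦃rβ⦄/⦃β+k⦄)^m = Σ_j a_j (q^β)^j`. -/
theorem statement6 (r : ℕ) (hr : 2 ≤ r) (m : ℕ) :
    ∃ (s : Finset ℤ) (a : ℤ → ℂ),
      ∀ β : ℂ, (∀ k ∈ Hr r, br r (β + (k : ℂ)) ≠ 0) →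
        ∑ k ∈ Hr r, (br r ((r : ℂ) * β) / br r (β + (k : ℂ))) ^ m
          = ∑ j ∈ s, a j * (qc r β) ^ j := by
  set e : ℤ := ((1:ℤ) - r) * m with he
  set F : Polynomial ℂ := ∑ k ∈ Hr r, Polynomial.C ((qc r (-(k:ℂ))) ^ m) *
      (∑ j ∈ Finset.range r,
        Polynomial.C ((qc r (-(2 * (k:ℂ)))) ^ (r - 1 - j)) * Polynomial.X ^ (2 * j)) ^ m
    with hF
  refine ⟨F.support.image (fun n : ℕ => (n:ℤ) + e),
    fun j => F.coeff (j - e).toNat, fun β hβ => ?_⟩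
  set z := qc r β with hz
  have zne : z ≠ 0 := qc_ne r β
  have hLHS : ∑ k ∈ Hr r, (br r ((r : ℂ) * β) / br r (β + (k : ℂ))) ^ m
      = z ^ e * Polynomial.eval z F := by
    rw [hF, Polynomial.eval_finset_sum, Finset.mul_sum]
    refine Finset.sum_congr rfl fun k hk => ?_
    rw [key r hr k β (hβ k hk), mul_pow, mul_pow]
    simp only [Polynomial.eval_mul, Polynomial.eval_pow, Polynomial.eval_C,
      Polynomial.eval_finset_sum, Polynomial.eval_X]
    rw [← zpow_natCast (z ^ ((1:ℤ) - r)) m, ← zpow_mul]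
    push_cast [he]
    ring
  rw [hLHS, Finset.sum_image (fun x _ y _ h => by omega)]
  have : ∀ n ∈ F.support, F.coeff (((n:ℤ) + e - e).toNat) * z ^ ((n:ℤ) + e)
      = z ^ e * (F.coeff n * z ^ n) := by
    intro n hn
    rw [add_sub_cancel_right, Int.toNat_natCast, zpow_add₀ zne, zpow_natCast]
    ring
  rw [Finset.sum_congr rfl this, ← Finset.mul_sum]
  congr 1
  rw [Polynomial.eval_eq_sum, Polynomial.sum_def]
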